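/- arXiv:1601.07509 — 4 statements merged into one kernel-verified Lean document; each statement's English description precedes it below -/
import Mathlib

section
/- Let X be a real Hilbert space, let Σ = [a,b] be a compact interval of real numbers, and let {Π_s}_{s∈Σ} be a family of orthogonal projections on X (bounded idempotent self-adjoint operators) such that the map s ↦ Π_s belongs to C^k(Σ; B(X)) for some k ∈ {0,1,2,…}. Then for every s₀ ∈ Σ there exist a relatively open neighborhood Σ₀ of s₀ in Σ and a family of bounded operators R_s from ran(Π_{s₀}) into ker(Π_{s₀}) such that the map s ↦ R_s is in C^k(Σ₀; B(ran(Π_{s₀}), ker(Π_{s₀}))), the range of Π_s equals the graph {q + R_s q : q ∈ ran(Π_{s₀})} for every s ∈ Σ₀, and ‖R_s‖ → 0 as s → s₀. -/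
open Filter Topology

/-- **Existence of graph representations for a `C^k` family of orthogonal projections**
(Lemma 3.2 / `crossex` of the paper). Given a family `Π_s` of orthogonal projections on a
real Hilbert space `X`, depending `C^k`-smoothly on `s ∈ [a,b]`, near each `s₀` the range of
`Π_s` is the graph of a `C^k` family of bounded operators
`R_s : ran(Π_{s₀}) → ker(Π_{s₀})` with `‖R_s‖ → 0` as `s → s₀`. -/
theorem graph_representation_of_Ck_family_of_orthogonal_projections
    {X : Type*} [NormedAddCommGroup X] [InnerProductSpace ℝ X] [CompleteSpace X]
    (a b : ℝ) (k : ℕ) (Pr : ℝ → X →L[ℝ] X)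
    (hidem : ∀ s ∈ Set.Icc a b, Pr s ∘L Pr s = Pr s)
    (hsa : ∀ s ∈ Set.Icc a b, ContinuousLinearMap.adjoint (Pr s) = Pr s)
    (hsmooth : ContDiffOn ℝ k Pr (Set.Icc a b)) :
    ∀ s₀ ∈ Set.Icc a b, ∃ S₀ : Set ℝ,
      s₀ ∈ S₀ ∧ S₀ ⊆ Set.Icc a b ∧
      (∃ U : Set ℝ, IsOpen U ∧ S₀ = U ∩ Set.Icc a b) ∧
      ∃ R : ℝ → (LinearMap.range (Pr s₀ : X →ₗ[ℝ] X) →L[ℝ] LinearMap.ker (Pr s₀ : X →ₗ[ℝ] X)),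
        ContDiffOn ℝ k R S₀ ∧
        (∀ s ∈ S₀, Set.range (Pr s) =
          {x : X | ∃ q : LinearMap.range (Pr s₀ : X →ₗ[ℝ] X), x = (q : X) + ((R s q : LinearMap.ker (Pr s₀ : X →ₗ[ℝ] X)) : X)}) ∧
        Tendsto (fun s => ‖R s‖) (𝓝[S₀] s₀) (𝓝 0) := by
  intro s₀ hs₀
  -- pointwise idempotency
  have hidem' : ∀ s ∈ Set.Icc a b, ∀ x, Pr s (Pr s x) = Pr s x := by
    intro s hs x
    have := congrArg (fun f => f x) (hidem s hs)
    simpa using this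
  have hfix : ∀ x : X, x ∈ LinearMap.range (Pr s₀ : X →ₗ[ℝ] X) ↔ Pr s₀ x = x := by
    intro x
    constructor
    · rintro ⟨y, rfl⟩
      exact hidem' s₀ hs₀ y
    · intro h; exact ⟨x, h⟩
  -- norm bound for orthogonal projection
  have hPnorm : ∀ x : X, ‖Pr s₀ x‖ ≤ ‖x‖ := by
    intro x
    have h1 : ‖Pr s₀ x‖ * ‖Pr s₀ x‖ ≤ ‖x‖ * ‖Pr s₀ x‖ := by
      have e1 : ‖Pr s₀ x‖ * ‖Pr s₀ x‖ = inner ℝ (Pr s₀ x) (Pr s₀ x) :=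
        (real_inner_self_eq_norm_mul_norm (Pr s₀ x)).symm
      have e2 : (inner ℝ (Pr s₀ x) (Pr s₀ x) : ℝ) = inner ℝ x (Pr s₀ x) := by
        calc (inner ℝ (Pr s₀ x) (Pr s₀ x) : ℝ)
            = inner ℝ (ContinuousLinearMap.adjoint (Pr s₀) x) (Pr s₀ x) := by
              rw [hsa s₀ hs₀]
          _ = inner ℝ x (Pr s₀ (Pr s₀ x)) := ContinuousLinearMap.adjoint_inner_left _ _ _
          _ = inner ℝ x (Pr s₀ x) := by rw [hidem' s₀ hs₀ x]
      rw [e1, e2]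
      exact real_inner_le_norm x (Pr s₀ x)
    rcases eq_or_lt_of_le (norm_nonneg (Pr s₀ x)) with h | h
    · rw [← h]; exact norm_nonneg x
    · exact le_of_mul_le_mul_right h1 h
  -- neighborhood where ‖Pr s - Pr s₀‖ < 1/2
  have hcont : ContinuousWithinAt Pr (Set.Icc a b) s₀ :=
    hsmooth.continuousOn s₀ hs₀
  have hev : {s : ℝ | dist (Pr s) (Pr s₀) < 1/2} ∈ 𝓝[Set.Icc a b] s₀ :=
    (Metric.tendsto_nhds.mp hcont.tendsto) (1/2) (by norm_num)
  obtain ⟨U, hUo, hs₀U, hU⟩ := mem_nhdsWithin.mp hev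
  set S₀ : Set ℝ := U ∩ Set.Icc a b with hS₀def
  have hsub : S₀ ⊆ Set.Icc a b := Set.inter_subset_right
  have hs₀S : s₀ ∈ S₀ := ⟨hs₀U, hs₀⟩
  have hsmall : ∀ s ∈ S₀, ‖Pr s - Pr s₀‖ ≤ 1/2 := by
    intro s hs
    have := hU hs
    rw [Set.mem_setOf_eq, dist_eq_norm] at this
    exact le_of_lt this
  -- submodules
  set V := LinearMap.range (Pr s₀ : X →ₗ[ℝ] X) with hVdef
  set W := LinearMap.ker (Pr s₀ : X →ₗ[ℝ] X) with hWdef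
  have hVclosed : IsClosed (V : Set X) := by
    have : (V : Set X) = {x | Pr s₀ x = x} := Set.ext fun x => hfix x
    rw [this]
    exact isClosed_eq (Pr s₀).continuous continuous_id
  haveI : CompleteSpace V := hVclosed.completeSpace_coe
  set ι : V →L[ℝ] X := Submodule.subtypeL V with hιdef
  set P₀V : X →L[ℝ] V :=
    (Pr s₀).codRestrict V (fun x => LinearMap.mem_range_self _ x) with hPVdef
  have hQmem : ∀ x : X, x - Pr s₀ x ∈ W := by
    intro x
    rw [hWdef, LinearMap.mem_ker]
    show Pr s₀ (x - Pr s₀ x) = 0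
    rw [map_sub, hidem' s₀ hs₀ x, sub_self]
  set Q : X →L[ℝ] W :=
    (ContinuousLinearMap.id ℝ X - Pr s₀).codRestrict W (fun x => hQmem x) with hQdef
  set A : ℝ → (V →L[ℝ] V) := fun s => P₀V ∘L ((Pr s) ∘L ι) with hAdef
  have hAapply : ∀ s (q : V), ((A s q : V) : X) = Pr s₀ (Pr s (q : X)) := by
    intro s q; rfl
  -- ‖1 - A s‖ ≤ 1/2
  have hAnorm : ∀ s ∈ S₀, ‖(1 : V →L[ℝ] V) - A s‖ ≤ 1/2 := by
    intro s hs
    refine ContinuousLinearMap.opNorm_le_bound _ (by norm_num) ?_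
    intro q
    have hq : Pr s₀ (q : X) = (q : X) := (hfix _).mp q.2
    have e : ((((1 : V →L[ℝ] V) - A s) q : V) : X)
        = Pr s₀ ((Pr s₀ - Pr s) (q : X)) := by
      simp [ContinuousLinearMap.sub_apply, ContinuousLinearMap.one_apply,
        map_sub, hAapply, hidem' s₀ hs₀, hq]
    have : ‖(((1 : V →L[ℝ] V) - A s) q : V)‖
        = ‖Pr s₀ ((Pr s₀ - Pr s) (q : X))‖ := by
      rw [← e]; rfl
    rw [this]
    calc ‖Pr s₀ ((Pr s₀ - Pr s) (q : X))‖ ≤ ‖(Pr s₀ - Pr s) (q : X)‖ := hPnorm _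
      _ ≤ ‖Pr s₀ - Pr s‖ * ‖(q : X)‖ := (Pr s₀ - Pr s).le_opNorm _
      _ ≤ (1/2) * ‖q‖ := by
          have := hsmall s hs
          rw [norm_sub_rev] at this
          exact mul_le_mul_of_nonneg_right this (norm_nonneg _) |>.trans
            (le_of_eq rfl)
  have hAunit : ∀ s ∈ S₀, IsUnit (A s) := by
    intro s hs
    have h : ‖(1 : V →L[ℝ] V) - A s‖ < 1 := lt_of_le_of_lt (hAnorm s hs) (by norm_num)
    exact ⟨Units.oneSub ((1 : V →L[ℝ] V) - A s) h, by simp [Units.oneSub]⟩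
  have hAmul : ∀ s ∈ S₀, ∀ q : V, A s (Ring.inverse (A s) q) = q := by
    intro s hs q
    have := Ring.mul_inverse_cancel (A s) (hAunit s hs)
    calc A s (Ring.inverse (A s) q) = (A s * Ring.inverse (A s)) q := rfl
      _ = (1 : V →L[ℝ] V) q := by rw [this]
      _ = q := rfl
  -- the operator family
  set R : ℝ → (V →L[ℝ] W) := fun s => (Q ∘L ((Pr s) ∘L ι)) ∘L Ring.inverse (A s)
    with hRdef
  have hRapply : ∀ s (q : V), ((R s q : W) : X)
      = Pr s (Ring.inverse (A s) q : X) - Pr s₀ (Pr s (Ring.inverse (A s) q : X)) := by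
    intro s q; rfl
  -- smoothness
  have hAsmooth : ContDiffOn ℝ k A S₀ := by
    have h1 : ContDiffOn ℝ (k : ℕ∞) (fun s => (Pr s) ∘L ι) S₀ :=
      ContDiffOn.clm_comp (hsmooth.mono hsub) contDiffOn_const
    exact ContDiffOn.clm_comp contDiffOn_const h1
  have hInvSmooth : ContDiffOn ℝ k (fun s => Ring.inverse (A s)) S₀ := by
    intro s hs
    have hu := hAunit s hs
    have h1 : ContDiffAt ℝ (k : ℕ∞) Ring.inverse (A s) := by
      have h := contDiffAt_ringInverse (n := (k : ℕ∞)) ℝ (R := V →L[ℝ] V) hu.unit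
      rwa [hu.unit_spec] at h
    exact h1.comp_contDiffWithinAt s (hAsmooth s hs)
  have hRsmooth : ContDiffOn ℝ k R S₀ := by
    have h1 : ContDiffOn ℝ (k : ℕ∞) (fun s => Q ∘L ((Pr s) ∘L ι)) S₀ :=
      ContDiffOn.clm_comp contDiffOn_const
        (ContDiffOn.clm_comp (hsmooth.mono hsub) contDiffOn_const)
    exact ContDiffOn.clm_comp h1 hInvSmooth
  -- injectivity of Pr s₀ on the range of Pr s
  have hinj : ∀ s ∈ S₀, ∀ x y : X, Pr s x = x → Pr s y = y →
      Pr s₀ x = Pr s₀ y → x = y := by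
    intro s hs x y hx hy hxy
    have h1 : x - y = (Pr s - Pr s₀) (x - y) := by
      rw [ContinuousLinearMap.sub_apply, map_sub, hx, hy, map_sub, hxy, sub_self,
        sub_zero]
    have h2 : ‖x - y‖ ≤ (1/2) * ‖x - y‖ := by
      calc ‖x - y‖ = ‖(Pr s - Pr s₀) (x - y)‖ := by rw [← h1]
        _ ≤ ‖Pr s - Pr s₀‖ * ‖x - y‖ := (Pr s - Pr s₀).le_opNorm _
        _ ≤ (1/2) * ‖x - y‖ :=
            mul_le_mul_of_nonneg_right (hsmall s hs) (norm_nonneg _)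
    have : ‖x - y‖ = 0 := le_antisymm (by linarith) (norm_nonneg _)
    exact sub_eq_zero.mp (norm_eq_zero.mp this)
  -- key computation: for q : V, x := Pr s (Ainv q) satisfies Pr s₀ x = q and x = q + R s q
  have hkey : ∀ s ∈ S₀, ∀ q : V,
      Pr s₀ (Pr s ((Ring.inverse (A s) q : V) : X)) = (q : X) ∧
      Pr s ((Ring.inverse (A s) q : V) : X) = (q : X) + ((R s q : W) : X) := by
    intro s hs q
    have h1 : Pr s₀ (Pr s ((Ring.inverse (A s) q : V) : X)) = (q : X) := by
      have h := Subtype.ext_iff.mp (hAmul s hs q)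
      rw [hAapply] at h
      exact h
    refine ⟨h1, ?_⟩
    rw [hRapply, h1]
    abel
  refine ⟨S₀, hs₀S, hsub, ⟨U, hUo, rfl⟩, R, hRsmooth, ?_, ?_⟩
  · -- range equality
    intro s hs
    ext x
    constructor
    · rintro ⟨y, rfl⟩
      set x := Pr s y with hx
      have hxfix : Pr s x = x := hidem' s (hsub hs) y
      set q : V := P₀V x with hqdef
      have hqcoe : (q : X) = Pr s₀ x := rfl
      obtain ⟨h1, h2⟩ := hkey s hs q
      set x' := Pr s ((Ring.inverse (A s) q : V) : X) with hx'
      have hx'fix : Pr s x' = x' := hidem' s (hsub hs) _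
      have : x' = x := hinj s hs x' x hx'fix hxfix (by rw [h1, hqcoe])
      exact ⟨q, by rw [← this, h2]⟩
    · rintro ⟨q, rfl⟩
      obtain ⟨h1, h2⟩ := hkey s hs q
      exact ⟨(Ring.inverse (A s) q : V), h2⟩
  · -- tendsto
    have hR0 : R s₀ = 0 := by
      ext q
      have : ((R s₀ q : W) : X) = 0 := by
        rw [hRapply, hidem' s₀ hs₀ _, sub_self]
      simpa using this
    have hRc : ContinuousWithinAt R S₀ s₀ := hRsmooth.continuousOn s₀ hs₀S
    have h : Tendsto (fun s => ‖R s‖) (𝓝[S₀] s₀) (𝓝 ‖R s₀‖) :=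
      (continuous_norm.tendsto (R s₀)).comp hRc.tendsto
    rw [hR0] at h
    convert h using 2
    exact (norm_zero (E := V →L[ℝ] W)).symm
end

section
/- Let X be a real Hilbert space and let J ∈ B(X) satisfy J* = −J and J² = −I, and define the symplectic form ω(u,v) = ⟨Ju, v⟩ for u, v ∈ X. Let V be a closed subspace of X with orthogonal complement W, let s₀ ∈ ℝ, and let s ↦ R_s ∈ B(V, W) be a family of bounded operators, defined for s in a neighborhood of s₀, that is differentiable at s₀ in the operator norm and satisfies R_{s₀} = 0. Assume that for every s in this neighborhood the graph {q + R_s q : q ∈ V} is isotropic for ω, i.e. ω(q + R_s q, p + R_s p) = 0 for all q, p ∈ V. Then the bilinear form m(q,p) := ω(q, Ṙ(s₀) p) on V, where Ṙ(s₀) denotes the derivative of s ↦ R_s at s₀, is symmetric: m(q,p) = m(p,q) for all q, p ∈ V. -/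
open Filter Topology
open scoped RealInnerProductSpace

set_option synthInstance.maxHeartbeats 1000000 in
/-- **Symmetry of the Maslov crossing form.** Let `J` be a complex structure compatible with
the symplectic form `ω(u,v) = ⟪Ju, v⟫` on a real Hilbert space `X`, let `V` be a closed
subspace with orthogonal complement `Vᗮ`, and let `s ↦ R s : V →L[ℝ] Vᗮ` be differentiable
at `s₀` with `R s₀ = 0`, such that the graph of `R s` is isotropic for `ω` for all `s` near
`s₀`. Then the crossing form `m(q,p) = ω(q, Ṙ(s₀) p)` is symmetric on `V`. -/
theorem maslov_crossing_form_symmetric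
    {X : Type*} [NormedAddCommGroup X] [InnerProductSpace ℝ X] [CompleteSpace X]
    (J : X →L[ℝ] X) (hJadj : ContinuousLinearMap.adjoint J = -J) (hJsq : J ∘L J = -1)
    (ω : X → X → ℝ) (hω : ∀ u v : X, ω u v = ⟪J u, v⟫)
    (V : Submodule ℝ X) (hV : IsClosed (V : Set X)) (s₀ : ℝ)
    (R : ℝ → (V →L[ℝ] (Vᗮ : Submodule ℝ X))) (R' : V →L[ℝ] (Vᗮ : Submodule ℝ X))
    (hderiv : HasDerivAt R R' s₀) (hR0 : R s₀ = 0)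
    (hiso : ∀ᶠ s in 𝓝 s₀, ∀ q p : V,
      ω ((q : X) + ((R s q : Vᗮ) : X)) ((p : X) + ((R s p : Vᗮ) : X)) = 0) :
    ∀ q p : V, ω (q : X) ((R' p : Vᗮ) : X) = ω (p : X) ((R' q : Vᗮ) : X) := by
  intro q p
  have hEv : ∀ v : V, HasDerivAt (fun s => ((R s v : Vᗮ) : X)) ((R' v : Vᗮ) : X) s₀ := by
    intro v
    have hclm : HasDerivAt (fun s => R s v) (R' v) s₀ := by
      have := (ContinuousLinearMap.apply ℝ (Vᗮ : Submodule ℝ X) v).hasFDerivAt.comp_hasDerivAt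
        s₀ hderiv
      exact this
    exact ((Vᗮ).subtypeL.hasFDerivAt.comp_hasDerivAt s₀ hclm)
  have hgq : HasDerivAt (fun s => (q : X) + ((R s q : Vᗮ) : X)) ((R' q : Vᗮ) : X) s₀ := by
    exact (hEv q).const_add (q : X)
  have hgp : HasDerivAt (fun s => (p : X) + ((R s p : Vᗮ) : X)) ((R' p : Vᗮ) : X) s₀ := by
    exact (hEv p).const_add (p : X)
  have hJq : HasDerivAt (fun s => J ((q : X) + ((R s q : Vᗮ) : X))) (J ((R' q : Vᗮ) : X)) s₀ :=
    J.hasFDerivAt.comp_hasDerivAt s₀ hgq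
  have hf := hJq.inner ℝ hgp
  simp only [hR0, ContinuousLinearMap.zero_apply, ZeroMemClass.coe_zero, add_zero] at hf
  have hzero : HasDerivAt
      (fun s => ⟪J ((q : X) + ((R s q : Vᗮ) : X)), (p : X) + ((R s p : Vᗮ) : X)⟫) 0 s₀ := by
    have heq : (fun s => ⟪J ((q : X) + ((R s q : Vᗮ) : X)), (p : X) + ((R s p : Vᗮ) : X)⟫)
        =ᶠ[𝓝 s₀] fun _ => (0 : ℝ) := by
      filter_upwards [hiso] with s hs
      have := hs q p
      rw [hω] at this
      simpa using this
    exact (hasDerivAt_const s₀ (0 : ℝ)).congr_of_eventuallyEq heq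
  have key := hf.unique hzero
  -- adjoint/antisymmetry: ⟪J x, y⟫ = -⟪J y, x⟫
  have hanti : ∀ x y : X, ⟪J x, y⟫ = -⟪J y, x⟫ := by
    intro x y
    have h1 : ⟪J x, y⟫ = ⟪x, ContinuousLinearMap.adjoint J y⟫ :=
      (ContinuousLinearMap.adjoint_inner_right J x y).symm
    rw [h1, hJadj]
    simp [real_inner_comm]
  rw [hω, hω]
  have := hanti ((R' q : Vᗮ) : X) (p : X)
  linarith [key, this]
end

section
/- Let X be a complex Hilbert space and let P and Q be orthogonal projections on X with ‖Q − P‖ < 1. Set D = Q − P. Then I − D² is a positive invertible operator, and the operators U = (I − D²)^{-1/2}((I − Q)(I − P) + Q P) and U' = (I − D²)^{-1/2}((I − P)(I − Q) + P Q) satisfy U U' = U' U = I and U P = Q U. In particular, U restricts to an isomorphism of the subspace ran(P) onto the subspace ran(Q). -/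
set_option maxHeartbeats 2000000 in
set_option synthInstance.maxHeartbeats 400000 in
/-- **Kato's transformation operator for a pair of nearby orthogonal projections.**
If `P`, `Q` are orthogonal projections on a complex Hilbert space with `‖Q - P‖ < 1`
and `D = Q - P`, then `I - D²` is a positive invertible operator, and the operators
`U = (I - D²)^{-1/2}((I - Q)(I - P) + QP)` and `U' = (I - D²)^{-1/2}((I - P)(I - Q) + PQ)`
are mutually inverse and satisfy `UP = QU`; in particular `U` restricts to an isomorphism
of `ran(P)` onto `ran(Q)`. Here `(I - D²)^{-1/2}` is the inverse of the positive square
root of `I - D²` given by the continuous functional calculus. -/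
theorem kato_transformation_operator
    {X : Type*} [NormedAddCommGroup X] [InnerProductSpace ℂ X] [CompleteSpace X]
    (P Q : X →L[ℂ] X)
    (hPidem : P * P = P) (hPsa : ContinuousLinearMap.adjoint P = P)
    (hQidem : Q * Q = Q) (hQsa : ContinuousLinearMap.adjoint Q = Q)
    (hnorm : ‖Q - P‖ < 1) (D : X →L[ℂ] X) (hD : D = Q - P) :
    (1 - D ^ 2).IsPositive ∧ IsUnit (1 - D ^ 2) ∧
    ∀ U U' : X →L[ℂ] X,
      U = Ring.inverse (CFC.sqrt (1 - D ^ 2)) * ((1 - Q) * (1 - P) + Q * P) →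
      U' = Ring.inverse (CFC.sqrt (1 - D ^ 2)) * ((1 - P) * (1 - Q) + P * Q) →
      U * U' = 1 ∧ U' * U = 1 ∧ U * P = Q * U ∧
      Set.BijOn U (Set.range P) (Set.range Q) := by
  have hDsa : IsSelfAdjoint D := by
    show star D = D
    rw [hD, star_sub, ContinuousLinearMap.star_eq_adjoint,
      ContinuousLinearMap.star_eq_adjoint, hPsa, hQsa]
  have hnD : ‖D‖ < 1 := by rw [hD]; exact hnorm
  -- positivity of `1 - D ^ 2`
  have hRpos : (1 - D ^ 2).IsPositive := by
    refine ContinuousLinearMap.isPositive_def'.mpr ⟨(IsSelfAdjoint.one (R := X →L[ℂ] X)).sub (hDsa.pow 2), fun x => ?_⟩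
    have hDx : ‖D x‖ ≤ ‖x‖ := by
      calc ‖D x‖ ≤ ‖D‖ * ‖x‖ := D.le_opNorm x
      _ ≤ 1 * ‖x‖ := mul_le_mul_of_nonneg_right hnD.le (norm_nonneg x)
      _ = ‖x‖ := one_mul _
    have key : ContinuousLinearMap.reApplyInnerSelf (1 - D ^ 2) x
        = ‖x‖ ^ 2 - ‖D x‖ ^ 2 := by
      have h2 : (D ^ 2) x = D (D x) := by rw [sq]; rfl
      rw [ContinuousLinearMap.reApplyInnerSelf, ContinuousLinearMap.sub_apply,
        ContinuousLinearMap.one_apply, inner_sub_left, map_sub, h2]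
      have h : (inner ℂ (D (D x)) x : ℂ) = inner ℂ (D x) (D x) := by
        have h := ContinuousLinearMap.adjoint_inner_left D x (D x)
        rwa [hDsa.adjoint_eq] at h
      rw [h, inner_self_eq_norm_sq, inner_self_eq_norm_sq]
    rw [key]
    nlinarith [norm_nonneg (D x), norm_nonneg x]
  -- invertibility of `1 - D ^ 2`
  have hRunit : IsUnit (1 - D ^ 2) := by
    have h2 : ‖D ^ 2‖ < 1 := by
      calc ‖D ^ 2‖ ≤ ‖D‖ ^ 2 := norm_pow_le' D two_pos
      _ < 1 := by nlinarith [norm_nonneg D]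
    exact (Units.oneSub (D ^ 2) h2).isUnit
  refine ⟨hRpos, hRunit, ?_⟩
  intro U U' hU hU'
  have hRnn : (0 : X →L[ℂ] X) ≤ 1 - D ^ 2 :=
    (ContinuousLinearMap.nonneg_iff_isPositive _).mpr hRpos
  -- basic algebra of the idempotents
  have hPP : ∀ x : X →L[ℂ] X, P * (P * x) = P * x := fun x => by rw [← mul_assoc, hPidem]
  have hQQ : ∀ x : X →L[ℂ] X, Q * (Q * x) = Q * x := fun x => by rw [← mul_assoc, hQidem]
  have hR : 1 - D ^ 2 = 1 - P - Q + P * Q + Q * P := by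
    rw [hD, sq, sub_mul, mul_sub, mul_sub, hPidem, hQidem]; abel
  have hPR : P * (1 - D ^ 2) = (1 - D ^ 2) * P := by
    rw [hR]; simp only [mul_sub, sub_mul, mul_add, add_mul, mul_one, one_mul,
      mul_assoc, hPidem, hQidem, hPP, hQQ]; abel
  have hQR : Q * (1 - D ^ 2) = (1 - D ^ 2) * Q := by
    rw [hR]; simp only [mul_sub, sub_mul, mul_add, add_mul, mul_one, one_mul,
      mul_assoc, hPidem, hQidem, hPP, hQQ]; abel
  have hVV' : ((1 - Q) * (1 - P) + Q * P) * ((1 - P) * (1 - Q) + P * Q) = 1 - D ^ 2 := by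
    rw [hR]; simp only [mul_sub, sub_mul, mul_add, add_mul, mul_one, one_mul,
      mul_assoc, hPidem, hQidem, hPP, hQQ]; abel
  have hV'V : ((1 - P) * (1 - Q) + P * Q) * ((1 - Q) * (1 - P) + Q * P) = 1 - D ^ 2 := by
    rw [hR]; simp only [mul_sub, sub_mul, mul_add, add_mul, mul_one, one_mul,
      mul_assoc, hPidem, hQidem, hPP, hQQ]; abel
  have hVP : ((1 - Q) * (1 - P) + Q * P) * P = Q * ((1 - Q) * (1 - P) + Q * P) := by
    simp only [mul_sub, sub_mul, mul_add, add_mul, mul_one, one_mul,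
      mul_assoc, hPidem, hQidem, hPP, hQQ]; abel
  -- the square root and its inverse
  set S := CFC.sqrt (1 - D ^ 2) with hSdef
  have hSS : S * S = 1 - D ^ 2 := CFC.sqrt_mul_sqrt_self _ hRnn
  have hSnn : (0 : X →L[ℂ] X) ≤ S := CFC.sqrt_nonneg _
  set Ri := Ring.inverse (1 - D ^ 2) with hRi
  have hab : S * (S * Ri) = 1 := by rw [← mul_assoc, hSS, Ring.mul_inverse_cancel _ hRunit]
  have hca : (Ri * S) * S = 1 := by rw [mul_assoc, hSS, Ring.inverse_mul_cancel _ hRunit]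
  have heq : Ri * S = S * Ri := by
    calc Ri * S = (Ri * S) * (S * (S * Ri)) := by rw [hab, mul_one]
    _ = ((Ri * S) * S) * (S * Ri) := by noncomm_ring
    _ = S * Ri := by rw [hca, one_mul]
  have hSunit : IsUnit S := ⟨⟨S, S * Ri, hab, by rw [← heq, hca]⟩, rfl⟩
  -- anything idempotent, self-adjoint and commuting with `1 - D ^ 2` commutes with `S`
  have key : ∀ A : X →L[ℂ] X, A * A = A → ContinuousLinearMap.adjoint A = A →
      A * (1 - D ^ 2) = (1 - D ^ 2) * A → A * S = S * A := by
    intro A hA2 hAsa hAR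
    set W : X →L[ℂ] X := 1 - (A + A) with hW
    have hWsa : star W = W := by
      rw [hW, star_sub, star_add, star_one, ContinuousLinearMap.star_eq_adjoint, hAsa]
    have hWW : W * W = 1 := by
      rw [hW]; simp only [mul_sub, sub_mul, mul_add, add_mul, mul_one, one_mul, hA2]; abel
    have hAD : A * D ^ 2 = D ^ 2 * A := by
      have h := hAR
      simp only [mul_sub, sub_mul, mul_one, one_mul] at h
      exact sub_right_injective h
    have hWR : W * (1 - D ^ 2) = (1 - D ^ 2) * W := by
      rw [hW]; simp only [mul_sub, sub_mul, mul_add, add_mul, mul_one, one_mul, hAD]; abel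
    have h1 : (0 : X →L[ℂ] X) ≤ W * S * W := by
      have := star_left_conjugate_nonneg hSnn W
      rwa [hWsa] at this
    have h2 : (W * S * W) * (W * S * W) = 1 - D ^ 2 := by
      have e1 : (W * S * W) * (W * S * W) = (W * S) * (W * W) * (S * W) := by noncomm_ring
      rw [e1, hWW, mul_one, mul_assoc, ← mul_assoc S S W, hSS, ← hWR, ← mul_assoc, hWW, one_mul]
    have h3 : S = W * S * W := by rw [hSdef]; exact CFC.sqrt_unique h2 h1
    have hWS : W * S = S * W := by
      conv_lhs => rw [h3]
      calc W * (W * S * W) = (W * W) * (S * W) := by noncomm_ring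
      _ = S * W := by rw [hWW, one_mul]
    have h4 : S - (A * S + A * S) = S - (S * A + S * A) := by
      have h := hWS
      rw [hW] at h
      simpa only [sub_mul, mul_sub, add_mul, mul_add, one_mul, mul_one] using h
    have h6 := sub_right_injective h4
    have h5 : (2 : ℂ) • (A * S) = (2 : ℂ) • (S * A) := by
      rw [two_smul, two_smul]; exact h6
    exact smul_right_injective (X →L[ℂ] X) two_ne_zero h5
  have hPS : P * S = S * P := key P hPidem hPsa hPR
  have hQS : Q * S = S * Q := key Q hQidem hQsa hQR
  -- the inverse of `S`
  set T := Ring.inverse S with hT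
  have hTS : T * S = 1 := Ring.inverse_mul_cancel _ hSunit
  have hST : S * T = 1 := Ring.mul_inverse_cancel _ hSunit
  have keyT : ∀ A : X →L[ℂ] X, A * S = S * A → Commute T A := by
    intro A h
    have hA : A * T = T * A := by
      calc A * T = T * S * (A * T) := by rw [hTS, one_mul]
      _ = T * ((S * A) * T) := by noncomm_ring
      _ = T * ((A * S) * T) := by rw [h]
      _ = T * A * (S * T) := by noncomm_ring
      _ = T * A := by rw [hST, mul_one]
    exact hA.symm
  have cTP : Commute T P := keyT P hPS
  have cTQ : Commute T Q := keyT Q hQS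
  have cTV : Commute T ((1 - Q) * (1 - P) + Q * P) :=
    (((Commute.one_right T).sub_right cTQ).mul_right ((Commute.one_right T).sub_right cTP)).add_right
      (cTQ.mul_right cTP)
  have cTV' : Commute T ((1 - P) * (1 - Q) + P * Q) :=
    (((Commute.one_right T).sub_right cTP).mul_right ((Commute.one_right T).sub_right cTQ)).add_right
      (cTP.mul_right cTQ)
  -- the main identities
  have hUU' : U * U' = 1 := by
    rw [hU, hU']
    calc (T * ((1 - Q) * (1 - P) + Q * P)) * (T * ((1 - P) * (1 - Q) + P * Q))
        = T * (((1 - Q) * (1 - P) + Q * P) * T) * ((1 - P) * (1 - Q) + P * Q) := by noncomm_ring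
    _ = T * (T * ((1 - Q) * (1 - P) + Q * P)) * ((1 - P) * (1 - Q) + P * Q) := by
        rw [← cTV.eq]
    _ = (T * T) * (((1 - Q) * (1 - P) + Q * P) * ((1 - P) * (1 - Q) + P * Q)) := by noncomm_ring
    _ = (T * T) * (S * S) := by rw [hVV', hSS]
    _ = T * (T * S) * S := by noncomm_ring
    _ = 1 := by rw [hTS, mul_one, hTS]
  have hU'U : U' * U = 1 := by
    rw [hU, hU']
    calc (T * ((1 - P) * (1 - Q) + P * Q)) * (T * ((1 - Q) * (1 - P) + Q * P))
        = T * (((1 - P) * (1 - Q) + P * Q) * T) * ((1 - Q) * (1 - P) + Q * P) := by noncomm_ring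
    _ = T * (T * ((1 - P) * (1 - Q) + P * Q)) * ((1 - Q) * (1 - P) + Q * P) := by
        rw [← cTV'.eq]
    _ = (T * T) * (((1 - P) * (1 - Q) + P * Q) * ((1 - Q) * (1 - P) + Q * P)) := by noncomm_ring
    _ = (T * T) * (S * S) := by rw [hV'V, hSS]
    _ = T * (T * S) * S := by noncomm_ring
    _ = 1 := by rw [hTS, mul_one, hTS]
  have hUP : U * P = Q * U := by
    rw [hU]
    calc (T * ((1 - Q) * (1 - P) + Q * P)) * P
        = T * (((1 - Q) * (1 - P) + Q * P) * P) := by rw [mul_assoc]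
    _ = T * (Q * ((1 - Q) * (1 - P) + Q * P)) := by rw [hVP]
    _ = (T * Q) * ((1 - Q) * (1 - P) + Q * P) := by rw [mul_assoc]
    _ = (Q * T) * ((1 - Q) * (1 - P) + Q * P) := by rw [cTQ.eq]
    _ = Q * (T * ((1 - Q) * (1 - P) + Q * P)) := by rw [mul_assoc]
  refine ⟨hUU', hU'U, hUP, ?_, ?_, ?_⟩
  · rintro x ⟨y, rfl⟩
    refine ⟨U y, ?_⟩
    calc Q (U y) = (Q * U) y := rfl
    _ = (U * P) y := by rw [hUP]
    _ = U (P y) := rfl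
  · intro a _ b _ hab2
    have h : (U' * U) a = (U' * U) b := by
      simp only [ContinuousLinearMap.mul_apply, hab2]
    rwa [hU'U, ContinuousLinearMap.one_apply, ContinuousLinearMap.one_apply] at h
  · rintro z ⟨w, rfl⟩
    refine ⟨P (U' w), ⟨U' w, rfl⟩, ?_⟩
    calc U (P (U' w)) = (U * P) (U' w) := rfl
    _ = (Q * U) (U' w) := by rw [hUP]
    _ = Q ((U * U') w) := rfl
    _ = Q w := by rw [hUU', ContinuousLinearMap.one_apply]
end

section
/- Let X be a complex Hilbert space, t₀ ∈ ℝ, P an orthogonal projection on X, and for t near t₀ let Q(t) be orthogonal projections on X such that D(t) := Q(t) − P satisfies ‖D(t)‖ = O(|t − t₀|) as t → t₀. For t near t₀ define U(t) = (I − D(t)²)^{-1/2}((I − Q(t))(I − P) + Q(t) P). Then P U(t) P = P Q(t) P + (1/2) P D(t)² P + O(|t − t₀|³) as t → t₀, i.e. ‖P U(t) P − P Q(t) P − (1/2) P D(t)² P‖ = O(|t − t₀|³). -/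
open Filter Topology Asymptotics
open scoped NNReal Pointwise

section Aux
set_option synthInstance.maxHeartbeats 1000000
set_option maxHeartbeats 1000000
variable {X : Type*} [NormedAddCommGroup X] [InnerProductSpace ℂ X] [CompleteSpace X]

private lemma real_key_aux (y : ℝ) (hy : 0 < y) (h1 : 3/4 ≤ y^2) (h2 : y^2 ≤ 5/4) :
    |y⁻¹ - 1 - (1 - y^2)/2| ≤ 2*(1-y^2)^2 := by
  have hinv : y * y⁻¹ = 1 := mul_inv_cancel₀ hy.ne'
  have hyl : 1/2 ≤ y := by nlinarith
  rw [abs_le]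
  constructor
  · nlinarith [sq_nonneg (1-y), sq_nonneg (1+y), mul_pos hy hy]
  · nlinarith [sq_nonneg (1-y), sq_nonneg (1+y), mul_pos hy hy, sq_nonneg ((1-y)*(1+y))]

private lemma sqrt_eq_real_cfc_aux (b : X →L[ℂ] X) (hb : 0 ≤ b)
    (hsp : ∀ x ∈ spectrum ℝ b, (3/4:ℝ) ≤ x) :
    CFC.sqrt b = cfc Real.sqrt b := by
  refine CFC.sqrt_unique (A := X →L[ℂ] X) ?_ ?_
  · rw [← cfc_mul _ _ b (by fun_prop) (by fun_prop)]
    conv_rhs => rw [← cfc_id ℝ b]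
    exact cfc_congr fun x hx => Real.mul_self_sqrt (by linarith [hsp x hx])
  · exact cfc_nonneg fun x _ => Real.sqrt_nonneg x

private lemma inv_sqrt_estimate_aux [Nontrivial X] (a : X →L[ℂ] X) (ha : IsSelfAdjoint a)
    (ha0 : 0 ≤ a) (han : ‖a‖ ≤ 1/4) :
    ‖Ring.inverse (CFC.sqrt (1 - a)) - 1 - (1/2:ℂ) • a‖ ≤ 2 * ‖a‖^2 := by
  set b : X →L[ℂ] X := 1 - a with hb_def
  have hspb : ∀ x ∈ spectrum ℝ b, 3/4 ≤ x ∧ |1 - x| ≤ ‖a‖ := by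
    intro x hx
    have hx' : x ∈ ({1} : Set ℝ) - spectrum ℝ a := by
      rw [hb_def] at hx
      rwa [show ((1 : X →L[ℂ] X)) = algebraMap ℝ _ (1:ℝ) by simp,
        ← spectrum.singleton_sub_eq] at hx
    obtain ⟨o, ho, t, ht, hxt⟩ := hx'
    rw [Set.mem_singleton_iff] at ho
    subst ho
    have ht0 : 0 ≤ t := spectrum_nonneg_of_nonneg ha0 ht
    have htn : t ≤ ‖a‖ := by simpa [abs_of_nonneg ht0] using spectrum.norm_le_norm_of_mem ht
    constructor
    · rw [← hxt]; linarith
    · rw [← hxt]; rw [show (1:ℝ) - (1 - t) = t by ring, abs_of_nonneg ht0]; exact htn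
  have hb0 : 0 ≤ b := by
    rw [StarOrderedRing.nonneg_iff_spectrum_nonneg (R := ℝ) b]
    exact fun x hx => by linarith [(hspb x hx).1]
  have hsqrt : CFC.sqrt b = cfc Real.sqrt b :=
    sqrt_eq_real_cfc_aux b hb0 fun x hx => (hspb x hx).1
  have hcont : ContinuousOn (fun x : ℝ => (Real.sqrt x)⁻¹) (spectrum ℝ b) :=
    Real.continuous_sqrt.continuousOn.inv₀ fun x hx =>
      (Real.sqrt_pos.mpr (by linarith [(hspb x hx).1])).ne'
  have h1 : cfc Real.sqrt b * cfc (fun x : ℝ => (Real.sqrt x)⁻¹) b = 1 := by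
    rw [← cfc_mul _ _ b (by fun_prop) hcont, ← cfc_const_one ℝ b]
    exact cfc_congr fun x hx =>
      mul_inv_cancel₀ (Real.sqrt_pos.mpr (by linarith [(hspb x hx).1])).ne'
  have h2 : cfc (fun x : ℝ => (Real.sqrt x)⁻¹) b * cfc Real.sqrt b = 1 := by
    rw [← cfc_mul _ _ b hcont (by fun_prop), ← cfc_const_one ℝ b]
    exact cfc_congr fun x hx =>
      inv_mul_cancel₀ (Real.sqrt_pos.mpr (by linarith [(hspb x hx).1])).ne'
  have hinv : Ring.inverse (CFC.sqrt b) = cfc (fun x : ℝ => (Real.sqrt x)⁻¹) b := by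
    rw [hsqrt]
    exact Ring.inverse_unit ⟨cfc Real.sqrt b, cfc (fun x : ℝ => (Real.sqrt x)⁻¹) b, h1, h2⟩
  have ha_cfc : a = cfc (fun x : ℝ => 1 - x) b := by
    rw [show (fun x:ℝ => 1 - x) = (fun x:ℝ => (fun _ => (1:ℝ)) x - id x) from rfl,
      cfc_sub (fun _ => (1:ℝ)) id b, cfc_const_one ℝ b, cfc_id ℝ b, hb_def, sub_sub_cancel]
  have hbsa : IsSelfAdjoint b := (IsSelfAdjoint.one (X →L[ℂ] X)).sub ha
  have hsmul : (1/2:ℂ) • a = (1/2:ℝ) • a := by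
    rw [show ((1/2:ℂ)) = (((1/2:ℝ)):ℂ) by norm_num, Complex.coe_smul]
  have key : Ring.inverse (CFC.sqrt b) - 1 - (1/2:ℂ) • a
      = cfc (fun x : ℝ => (Real.sqrt x)⁻¹ - 1 - (1/2:ℝ) • (1 - x)) b := by
    rw [cfc_sub _ _ b (by exact hcont.sub (continuousOn_const)) (by fun_prop),
      cfc_sub _ _ b hcont (continuousOn_const),
      cfc_smul (1/2:ℝ) _ b (by fun_prop), cfc_const_one ℝ b, hinv, hsmul, ha_cfc]
  rw [key]
  refine norm_cfc_le (by positivity) fun x hx => ?_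
  obtain ⟨hx1, hx2⟩ := hspb x hx
  have hx3 : x ≤ 5/4 := by rcases abs_le.mp hx2 with ⟨hl, hr⟩; linarith
  have hy0 : 0 < Real.sqrt x := Real.sqrt_pos.mpr (by linarith)
  have hy2 : (Real.sqrt x)^2 = x := Real.sq_sqrt (by linarith)
  have hrk := real_key_aux (Real.sqrt x) hy0 (by rw [hy2]; linarith) (by rw [hy2]; linarith)
  rw [hy2] at hrk
  have h1x : (1-x)^2 ≤ ‖a‖^2 := by
    have h := pow_le_pow_left₀ (abs_nonneg (1-x)) hx2 2
    rwa [sq_abs] at h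
  calc ‖(Real.sqrt x)⁻¹ - 1 - (1/2:ℝ) • (1 - x)‖ = |(Real.sqrt x)⁻¹ - 1 - (1 - x)/2| := by
        rw [Real.norm_eq_abs, smul_eq_mul]; congr 1; ring
    _ ≤ 2*(1-x)^2 := hrk
    _ ≤ 2 * ‖a‖^2 := by linarith

private lemma proj_norm_le_aux (P : X →L[ℂ] X) (hP : P * P = P)
    (hPsa : ContinuousLinearMap.adjoint P = P) : ‖P‖ ≤ 1 := by
  have hstar : star P = P := by rw [ContinuousLinearMap.star_eq_adjoint, hPsa]
  have h := CStarRing.norm_star_mul_self (x := P)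
  rw [hstar, hP] at h
  nlinarith [norm_nonneg P]

private lemma pointwise_bound_aux [Nontrivial X] (P Q : X →L[ℂ] X) (hP : P * P = P)
    (hPsa : ContinuousLinearMap.adjoint P = P) (hQ : Q * Q = Q)
    (hQsa : ContinuousLinearMap.adjoint Q = Q) (hDn : ‖Q - P‖ ≤ 1/2) :
    ‖P * (Ring.inverse (CFC.sqrt (1 - (Q - P) ^ 2)) * ((1 - Q) * (1 - P) + Q * P)) * P
      - (P * Q * P + (1 / 2 : ℂ) • (P * (Q - P) ^ 2 * P))‖ ≤ 2 * ‖Q - P‖ ^ 3 := by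
  set D : X →L[ℂ] X := Q - P with hD_def
  set V : X →L[ℂ] X := Ring.inverse (CFC.sqrt (1 - D^2)) with hV_def
  set E : X →L[ℂ] X := V - 1 - (1/2:ℂ) • D^2 with hE_def
  have hDsa : IsSelfAdjoint D := by
    rw [IsSelfAdjoint, ContinuousLinearMap.star_eq_adjoint, hD_def, map_sub, hPsa, hQsa]
  have hD2sa : IsSelfAdjoint (D^2) := hDsa.pow 2
  have hD2nn : 0 ≤ D^2 := by
    rw [sq]
    nth_rewrite 1 [← hDsa]
    exact star_mul_self_nonneg D
  have hD2n : ‖D^2‖ ≤ ‖D‖^2 := by rw [sq, sq]; exact norm_mul_le D D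
  have hDnn := norm_nonneg D
  have hEb : ‖E‖ ≤ 2 * ‖D‖^4 := by
    refine le_trans (inv_sqrt_estimate_aux (D^2) hD2sa hD2nn (by nlinarith)) ?_
    have : ‖D^2‖^2 ≤ (‖D‖^2)^2 := pow_le_pow_left₀ (norm_nonneg _) hD2n 2
    nlinarith
  have hPn : ‖P‖ ≤ 1 := proj_norm_le_aux P hP hPsa
  have hQn : ‖Q‖ ≤ 1 := proj_norm_le_aux Q hQ hQsa
  have hWP : ((1 - Q) * (1 - P) + Q * P) * P = Q * P := by
    have h0 : (1 - P) * P = 0 := by rw [sub_mul, one_mul, hP, sub_self]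
    calc ((1 - Q) * (1 - P) + Q * P) * P = (1 - Q) * ((1 - P) * P) + Q * (P * P) := by
          noncomm_ring
      _ = Q * P := by rw [h0, hP, mul_zero, zero_add]
  have hVE : V = 1 + (1/2:ℂ) • D^2 + E := by rw [hE_def]; abel
  have hkey : P * (V * ((1 - Q) * (1 - P) + Q * P)) * P
      - (P * Q * P + (1 / 2 : ℂ) • (P * D ^ 2 * P))
      = (1/2:ℂ) • (P * (D^2 * (D * P))) + P * (E * (Q * P)) := by
    rw [mul_assoc P _ P, mul_assoc V _ P, hWP, hVE]
    have hDP : D * P = Q * P - P := by rw [hD_def, sub_mul, hP]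
    rw [hDP]
    simp only [add_mul, mul_add, one_mul, smul_mul_assoc, mul_smul_comm, mul_sub, sub_mul,
      smul_sub]
    simp only [mul_assoc]
    abel
  rw [hkey]
  have hA : ‖P * (D^2 * (D * P))‖ ≤ ‖D‖^3 := by
    calc ‖P * (D^2 * (D * P))‖ ≤ ‖P‖ * (‖D^2‖ * (‖D‖ * ‖P‖)) := by
          refine le_trans (norm_mul_le _ _) ?_
          gcongr
          refine le_trans (norm_mul_le _ _) ?_
          gcongr
          exact norm_mul_le _ _
      _ ≤ 1 * (‖D‖^2 * (‖D‖ * 1)) := by gcongr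
      _ = ‖D‖^3 := by ring
  have hB : ‖P * (E * (Q * P))‖ ≤ ‖E‖ := by
    calc ‖P * (E * (Q * P))‖ ≤ ‖P‖ * (‖E‖ * (‖Q‖ * ‖P‖)) := by
          refine le_trans (norm_mul_le _ _) ?_
          gcongr
          refine le_trans (norm_mul_le _ _) ?_
          gcongr
          exact norm_mul_le _ _
      _ ≤ 1 * (‖E‖ * (1 * 1)) := by gcongr
      _ = ‖E‖ := by ring
  calc ‖(1/2:ℂ) • (P * (D^2 * (D * P))) + P * (E * (Q * P))‖
      ≤ ‖(1/2:ℂ) • (P * (D^2 * (D * P)))‖ + ‖P * (E * (Q * P))‖ := norm_add_le _ _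
    _ ≤ (1/2) * ‖D‖^3 + 2 * ‖D‖^4 := by
        rw [norm_smul, show ((1/2:ℂ)) = (((1/2:ℝ)):ℂ) by norm_num]
        have hn : ‖(((1/2:ℝ)):ℂ)‖ = 1/2 := by
          rw [Complex.norm_real, Real.norm_eq_abs]; norm_num
        rw [hn]
        gcongr
        exact le_trans hB hEb
    _ ≤ 2 * ‖D‖^3 := by nlinarith [pow_nonneg hDnn 3, pow_nonneg hDnn 4,
        mul_le_mul_of_nonneg_left hDn (pow_nonneg hDnn 3)]

end Aux


set_option synthInstance.maxHeartbeats 400000 in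
/-- **Second-order expansion of `P U(t) P`.** If `P` is an orthogonal projection and `Q t`
are orthogonal projections with `D t = Q t - P = O(|t - t₀|)`, then the transformation
operator `U(t) = (I - D(t)²)^{-1/2}((I - Q(t))(I - P) + Q(t)P)` satisfies
`P U(t) P = P Q(t) P + (1/2) P D(t)² P + O(|t - t₀|³)` as `t → t₀`. -/
theorem compressed_transformation_operator_second_order_expansion
    {X : Type*} [NormedAddCommGroup X] [InnerProductSpace ℂ X] [CompleteSpace X]
    (t₀ : ℝ) (P : X →L[ℂ] X) (hPidem : P * P = P) (hPsa : ContinuousLinearMap.adjoint P = P)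
    (Q : ℝ → X →L[ℂ] X)
    (hQ : ∀ᶠ t in 𝓝 t₀, Q t * Q t = Q t ∧ ContinuousLinearMap.adjoint (Q t) = Q t)
    (hD : (fun t => Q t - P) =O[𝓝 t₀] fun t => t - t₀) :
    (fun t => P * (Ring.inverse (CFC.sqrt (1 - (Q t - P) ^ 2))
          * ((1 - Q t) * (1 - P) + Q t * P)) * P
        - (P * Q t * P + (1 / 2 : ℂ) • (P * (Q t - P) ^ 2 * P)))
      =O[𝓝 t₀] fun t => (t - t₀) ^ 3 := by
  rcases subsingleton_or_nontrivial X with hX | hX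
  · have h0 : ∀ t : ℝ, (P * (Ring.inverse (CFC.sqrt (1 - (Q t - P) ^ 2))
          * ((1 - Q t) * (1 - P) + Q t * P)) * P
        - (P * Q t * P + (1 / 2 : ℂ) • (P * (Q t - P) ^ 2 * P))) = 0 := fun t =>
      Subsingleton.elim _ _
    simp only [h0]
    exact isBigO_zero _ _
  · obtain ⟨c, hc0, hc⟩ := hD.exists_pos
    rw [isBigO_iff]
    refine ⟨2 * c^3, ?_⟩
    have h1 : ∀ᶠ t in 𝓝 t₀, ‖Q t - P‖ ≤ c * |t - t₀| := by
      filter_upwards [hc.bound] with t ht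
      simpa [Real.norm_eq_abs] using ht
    have h2 : ∀ᶠ t in 𝓝 t₀, |t - t₀| ≤ 1/(2*c) := by
      have hmem := Metric.closedBall_mem_nhds t₀ (show (0:ℝ) < 1/(2*c) by positivity)
      filter_upwards [hmem] with t ht
      simpa [Metric.mem_closedBall, Real.dist_eq] using ht
    filter_upwards [hQ, h1, h2] with t hQt hb hsmall
    have hDn : ‖Q t - P‖ ≤ 1/2 := by
      refine le_trans hb ?_
      calc c * |t - t₀| ≤ c * (1/(2*c)) := by gcongr
        _ = 1/2 := by field_simp
    refine le_trans (pointwise_bound_aux P (Q t) hPidem hPsa hQt.1 hQt.2 hDn) ?_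
    have habs : (0:ℝ) ≤ |t - t₀| := abs_nonneg _
    calc 2 * ‖Q t - P‖ ^ 3 ≤ 2 * (c * |t - t₀|) ^ 3 := by
          gcongr 2 * ?_ ^ 3
      _ = 2 * c^3 * ‖(t - t₀)^3‖ := by
          rw [norm_pow, Real.norm_eq_abs]; ring
end
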